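/- The category of quantitative L-algebras has effective subcongruences: let A be a quantitative L-algebra and let R be a subcongruence on the underlying extended metric space of A such that each R ε is closed under the operations of A × A, i.e. for every n, every σ : L.Functions n and all x, y : Fin n → A, if (x i, y i) ∈ R ε for all i then (funMap σ x, funMap σ y) ∈ R ε. Then there exist a quantitative L-algebra C and a surjective nonexpanding homomorphism f : A → C such that for every real ε ≥ 0 and all x, y ∈ A: (x,y) ∈ R ε if and only if edist (f x) (f y) ≤ ε. -/

import Mathlib

open FirstOrder FirstOrder.Language
open scoped NNReal ENNReal

/-- A quantitative `L`-algebra: all operations are nonexpanding for the sup metric. -/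
def QuantAlg (L : Language) (A : Type*) [EMetricSpace A] [L.Structure A] : Prop :=
  ∀ (n : ℕ) (σ : L.Functions n) (x y : Fin n → A),
    edist (Structure.funMap σ x) (Structure.funMap σ y) ≤ ⨆ i, edist (x i) (y i)

/-- A homomorphism of quantitative `L`-algebras: a nonexpanding map preserving all
operations. -/
def IsQHom (L : Language) (A B : Type*) [EMetricSpace A] [L.Structure A]
    [EMetricSpace B] [L.Structure B] (f : A → B) : Prop :=
  (∀ x y : A, edist (f x) (f y) ≤ edist x y) ∧
  ∀ (n : ℕ) (σ : L.Functions n) (x : Fin n → A),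
    f (Structure.funMap σ x) = Structure.funMap σ (f ∘ x)

/-- A subcongruence on an extended metric space `X`. -/
structure Subcong (X : Type*) [EMetricSpace X] where
  rel : ℝ≥0 → Set (X × X)
  mono : ∀ ⦃ε ε' : ℝ≥0⦄, ε ≤ ε' → rel ε ⊆ rel ε'
  isRefl : ∀ (ε : ℝ≥0) (x y : X), edist x y ≤ (ε : ℝ≥0∞) → (x, y) ∈ rel ε
  isSymm : ∀ (ε : ℝ≥0) (x y : X), (x, y) ∈ rel ε → (y, x) ∈ rel ε
  isTrans : ∀ (ε ε' : ℝ≥0) (x y z : X),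
    (x, y) ∈ rel ε → (y, z) ∈ rel ε' → (x, z) ∈ rel (ε + ε')
  cont : ∀ ε : ℝ≥0, rel ε = ⋂ n : ℕ, rel (ε + 1 / (n + 1))

/-- A bundled extended metric space with an `L`-structure. -/
structure MetAlg (L : Language) where
  carrier : Type u
  [emet : EMetricSpace carrier]
  [str : L.Structure carrier]

attribute [instance] MetAlg.emet MetAlg.str

noncomputable section Aux
universe u
variable {X : Type u} [EMetricSpace X] (R : Subcong X)

def scD (x y : X) : ℝ≥0∞ := ⨅ (ε : ℝ≥0) (_ : (x, y) ∈ R.rel ε), (ε : ℝ≥0∞)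

lemma scD_le {ε : ℝ≥0} {x y : X} (h : (x, y) ∈ R.rel ε) : scD R x y ≤ ε :=
  iInf₂_le ε h

lemma mem_of_scD_le {ε : ℝ≥0} {x y : X} (h : scD R x y ≤ ε) : (x, y) ∈ R.rel ε := by
  rw [R.cont ε]
  refine Set.mem_iInter.2 fun n => ?_
  have hpos : (0 : ℝ≥0) < 1 / (n + 1) := by positivity
  have h1 : scD R x y < (ε : ℝ≥0∞) + (1 / (n + 1) : ℝ≥0) := by
    refine lt_of_le_of_lt h ?_
    exact ENNReal.lt_add_right ENNReal.coe_ne_top (by exact_mod_cast hpos.ne')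
  rw [scD, iInf_lt_iff] at h1
  obtain ⟨ε', hlt⟩ := h1
  rw [iInf_lt_iff] at hlt
  obtain ⟨hmem, hlt⟩ := hlt
  have : ε' ≤ ε + 1 / (n + 1) := by exact_mod_cast hlt.le
  exact R.mono this hmem

lemma scD_self (x : X) : scD R x x = 0 :=
  le_antisymm (by simpa using scD_le R (R.isRefl 0 x x (by simp))) zero_le

lemma scD_comm (x y : X) : scD R x y = scD R y x := by
  have key : ∀ a b : X, scD R a b ≤ scD R b a := fun a b =>
    le_iInf₂ fun ε h => scD_le R (R.isSymm ε b a h)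
  exact le_antisymm (key x y) (key y x)

lemma scD_triangle (x y z : X) : scD R x z ≤ scD R x y + scD R y z := by
  by_cases h1 : scD R x y = ⊤
  · simp [h1]
  by_cases h2 : scD R y z = ⊤
  · simp [h2]
  have e1 : scD R x y = ((scD R x y).toNNReal : ℝ≥0∞) := (ENNReal.coe_toNNReal h1).symm
  have e2 : scD R y z = ((scD R y z).toNNReal : ℝ≥0∞) := (ENNReal.coe_toNNReal h2).symm
  have m1 := mem_of_scD_le R e1.le
  have m2 := mem_of_scD_le R e2.le
  have := scD_le R (R.isTrans _ _ x y z m1 m2)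
  rw [ENNReal.coe_add] at this
  calc scD R x z ≤ _ := this
    _ = scD R x y + scD R y z := by rw [← e1, ← e2]

lemma scD_le_edist (x y : X) : scD R x y ≤ edist x y := by
  by_cases h : edist x y = ⊤
  · simp [h]
  have := scD_le R (R.isRefl (edist x y).toNNReal x y (ENNReal.coe_toNNReal h).symm.le)
  rwa [ENNReal.coe_toNNReal h] at this

def scSetoid : Setoid X :=
  ⟨fun x y => scD R x y = 0,
   fun x => scD_self R x,
   fun {x y} h => by rw [scD_comm] at h; exact h,
   fun {x y z} h1 h2 => le_antisymm (by
     calc scD R x z ≤ scD R x y + scD R y z := scD_triangle R x y z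
       _ = 0 := by rw [h1, h2, add_zero]) zero_le⟩

lemma scD_lift_wd : ∀ (a b a' b' : X), (scSetoid R).r a a' → (scSetoid R).r b b' →
    scD R a b = scD R a' b' := by
  intro a b a' b' ha hb
  have ha0 : scD R a a' = 0 := ha
  have hb0 : scD R b b' = 0 := hb
  have key : ∀ u v u' v' : X, scD R u u' = 0 → scD R v v' = 0 →
      scD R u' v' ≤ scD R u v := by
    intro u v u' v' hu hv
    calc scD R u' v' ≤ scD R u' u + scD R u v' := scD_triangle R _ _ _
      _ ≤ scD R u' u + (scD R u v + scD R v v') := by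
          gcongr; exact scD_triangle R _ _ _
      _ = scD R u v := by rw [scD_comm R u' u, hu, hv]; simp
  have hb' : scD R b' b = 0 := by rw [scD_comm]; exact hb0
  have ha' : scD R a' a = 0 := by rw [scD_comm]; exact ha0
  exact le_antisymm (key a' b' a b ha' hb') (key a b a' b' ha0 hb0)

def scQEMet : EMetricSpace (Quotient (scSetoid R)) where
  edist := Quotient.lift₂ (scD R) (scD_lift_wd R)
  edist_self := fun q => Quotient.inductionOn q fun x => scD_self R x
  edist_comm := fun p q => Quotient.inductionOn₂ p q fun x y => scD_comm R x y
  edist_triangle := fun p q r => Quotient.inductionOn₃ p q r fun x y z => scD_triangle R x y z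
  eq_of_edist_eq_zero := fun {p q} h => Quotient.inductionOn₂ p q
    (fun x y h => Quotient.sound h) h


lemma scD_funMap {L : Language} [L.Structure X]
    (hR : ∀ (ε : ℝ≥0) (n : ℕ) (σ : L.Functions n) (x y : Fin n → X),
      (∀ i, (x i, y i) ∈ R.rel ε) →
        (Structure.funMap σ x, Structure.funMap σ y) ∈ R.rel ε)
    (n : ℕ) (σ : L.Functions n) (x y : Fin n → X) :
    scD R (Structure.funMap σ x) (Structure.funMap σ y) ≤ ⨆ i, scD R (x i) (y i) := by
  set s := ⨆ i, scD R (x i) (y i) with hs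
  by_cases htop : s = ⊤
  · simp [htop]
  have hle : ∀ i, scD R (x i) (y i) ≤ (s.toNNReal : ℝ≥0∞) := by
    intro i
    rw [ENNReal.coe_toNNReal htop]
    exact le_iSup (fun i => scD R (x i) (y i)) i
  have hmem : ∀ i, (x i, y i) ∈ R.rel s.toNNReal := fun i => mem_of_scD_le R (hle i)
  have := scD_le R (hR s.toNNReal n σ x y hmem)
  rwa [ENNReal.coe_toNNReal htop] at this

noncomputable def scQStr {L : Language} (hL : ∀ n, IsEmpty (L.Relations n))
    [L.Structure X] : L.Structure (Quotient (scSetoid R)) where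
  funMap σ x := ⟦Structure.funMap σ (fun i => (x i).out)⟧
  RelMap {n} r := (hL n).elim r

end Aux

theorem qalg_effective_subcong (L : Language) (hL : ∀ n, IsEmpty (L.Relations n))
    {A : Type u} [EMetricSpace A] [L.Structure A] (hA : QuantAlg L A)
    (R : Subcong A)
    (hR : ∀ (ε : ℝ≥0) (n : ℕ) (σ : L.Functions n) (x y : Fin n → A),
      (∀ i, (x i, y i) ∈ R.rel ε) →
        (Structure.funMap σ x, Structure.funMap σ y) ∈ R.rel ε) :
    ∃ (C : MetAlg.{u} L) (f : A → C.carrier),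
      QuantAlg L C.carrier ∧ IsQHom L A C.carrier f ∧ Function.Surjective f ∧
      ∀ (ε : ℝ≥0) (x y : A), (x, y) ∈ R.rel ε ↔ edist (f x) (f y) ≤ (ε : ℝ≥0∞) := by
  letI instE : EMetricSpace (Quotient (scSetoid R)) := scQEMet R
  letI instS : L.Structure (Quotient (scSetoid R)) := scQStr R hL
  have hedist : ∀ x y : A, edist (⟦x⟧ : Quotient (scSetoid R)) ⟦y⟧ = scD R x y :=
    fun x y => rfl
  have hzero : ∀ x : A, scD R (⟦x⟧ : Quotient (scSetoid R)).out x = 0 := fun x =>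
    Quotient.exact (Quotient.out_eq (⟦x⟧ : Quotient (scSetoid R)) : _)
  have hsame : ∀ x y : A, scD R x y = 0 → scD R y x = 0 := fun x y h => by
    rw [scD_comm]; exact h
  -- edist of mk's in the quotient is scD of reps of the classes
  have hout : ∀ p q : Quotient (scSetoid R), edist p q = scD R p.out q.out := by
    intro p q
    conv_lhs => rw [← Quotient.out_eq p, ← Quotient.out_eq q]
    exact hedist p.out q.out
  refine ⟨@MetAlg.mk L (Quotient (scSetoid R)) instE instS, Quotient.mk _, ?_, ⟨?_, ?_⟩, ?_, ?_⟩
  · -- QuantAlg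
    intro n σ x y
    show scD R (Structure.funMap σ fun i => (x i).out)
        (Structure.funMap σ fun i => (y i).out) ≤ _
    refine le_trans (scD_funMap R hR n σ _ _) ?_
    refine iSup_mono fun i => ?_
    rw [hout (x i) (y i)]
  · -- nonexpanding
    intro x y
    exact (hedist x y).trans_le (scD_le_edist R x y)
  · -- preserves operations
    intro n σ x
    refine Quotient.sound ?_
    show scD R (Structure.funMap σ x) (Structure.funMap σ fun i => (⟦x i⟧ : Quotient (scSetoid R)).out) = 0
    refine le_antisymm ?_ zero_le
    refine le_trans (scD_funMap R hR n σ _ _) ?_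
    refine iSup_le fun i => ?_
    exact le_of_eq (hsame _ _ (hzero (x i)))
  · exact Quotient.exists_rep
  · intro ε x y
    rw [hedist x y]
    exact ⟨fun h => scD_le R h, fun h => mem_of_scD_le R h⟩
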